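/- With the two-process CCA setup (H, C12 with ‖C12‖ < 1, C21 = C12*, Q, H(Q), M1, M2 as before), let L2 = M2 ∩ M1^⊥ in H(Q) and define B = P_{L1|M2} (P_{L2|M2})⁻¹ where L1 = M1. Then for h = (0, f̃2) ∈ L2, B h = (C12 C22.1⁻¹ f̃2, C21 C12 C22.1⁻¹ f̃2), where C22.1 = I − C21 C12. -/
import Mathlib


open scoped RealInnerProductSpace
open ContinuousLinearMap

/-- The element of `H₀ = H × H` (with the ℓ² product structure) with components `a, b`. -/
noncomputable def mk2 {H : Type*} (a b : H) : WithLp 2 (H × H) := (WithLp.equiv 2 (H × H)).symm (a, b)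

/-- First component. -/
noncomputable def pr1 {H : Type*} (p : WithLp 2 (H × H)) : H := (WithLp.equiv 2 (H × H) p).1

/-- Second component. -/
noncomputable def pr2 {H : Type*} (p : WithLp 2 (H × H)) : H := (WithLp.equiv 2 (H × H) p).2

section Aux
variable {H : Type*} [NormedAddCommGroup H] [InnerProductSpace ℝ H] [CompleteSpace H]

lemma pr1_mk2 (a b : H) : pr1 (mk2 a b) = a := rfl
lemma pr2_mk2 (a b : H) : pr2 (mk2 a b) = b := rfl
lemma mk2_ext (p : WithLp 2 (H × H)) : mk2 (pr1 p) (pr2 p) = p := rfl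

lemma inner_mk2 (a b c d : H) : ⟪mk2 a b, mk2 c d⟫ = ⟪a, c⟫ + ⟪b, d⟫ := by
  simp [mk2, WithLp.prod_inner_apply]

lemma inner_mk2_left (a b : H) (p : WithLp 2 (H × H)) :
    ⟪mk2 a b, p⟫ = ⟪a, pr1 p⟫ + ⟪b, pr2 p⟫ := rfl

lemma inner_mk2_right (a b : H) (p : WithLp 2 (H × H)) :
    ⟪p, mk2 a b⟫ = ⟪pr1 p, a⟫ + ⟪pr2 p, b⟫ := rfl

lemma mk2_eq_iff (a b c d : H) : mk2 a b = mk2 c d ↔ a = c ∧ b = d := by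
  simp [mk2, Prod.ext_iff]

lemma mk2_sub (a b c d : H) : mk2 a b - mk2 c d = mk2 (a - c) (b - d) := rfl

end Aux

/-- Corollary A.4: with `K = C22.1⁻¹ = (I − C21 C12)⁻¹`, for `h = (0, f̃2) ∈ L2`, the unique
`m ∈ M2` with `P_{L2} m = h` is `m = (C12 K f̃2, K f̃2)`, and
`B h = P_{L1} m = (C12 K f̃2, C21 C12 K f̃2)`-- projections being taken in the `H(Q)` inner
product `⟪h, Q⁻¹ h'⟫₀`, with `L1 = M1 = {(f1, C21 f1)}` and `L2 = {(0, g)}`. -/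
theorem B_formula
    {H : Type*} [NormedAddCommGroup H] [InnerProductSpace ℝ H] [CompleteSpace H]
    (C12 K : H →L[ℝ] H) (hC : ‖C12‖ < 1)
    (Q Qinv : WithLp 2 (H × H) →L[ℝ] WithLp 2 (H × H))
    (hQ : ∀ p : WithLp 2 (H × H),
      Q p = mk2 (pr1 p + C12 (pr2 p)) (ContinuousLinearMap.adjoint C12 (pr1 p) + pr2 p))
    (hQQi : Q ∘L Qinv = 1) (hQiQ : Qinv ∘L Q = 1)
    (hK1 : ((1 : H →L[ℝ] H) - ContinuousLinearMap.adjoint C12 ∘L C12) ∘L K = 1)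
    (hK2 : K ∘L ((1 : H →L[ℝ] H) - ContinuousLinearMap.adjoint C12 ∘L C12) = 1) :
    ∀ ftilde : H,
      -- `P_{L2} (C12 K f̃2, K f̃2) = (0, f̃2)`:
      (∀ g : H,
        ⟪mk2 (C12 (K ftilde)) (K ftilde) - mk2 0 ftilde, Qinv (mk2 0 g)⟫ = 0) ∧
      -- uniqueness: any `(C12 f2', f2') ∈ M2` with `P_{L2}`-projection `(0, f̃2)` is `m`:
      (∀ f2' : H,
        (∀ g : H, ⟪mk2 (C12 f2') f2' - mk2 0 ftilde, Qinv (mk2 0 g)⟫ = 0) →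
        f2' = K ftilde) ∧
      -- `B (0, f̃2) = P_{L1} m = (C12 K f̃2, C21 C12 K f̃2)`:
      (∀ f1 : H,
        ⟪mk2 (C12 (K ftilde)) (K ftilde)
            - mk2 (C12 (K ftilde)) (ContinuousLinearMap.adjoint C12 (C12 (K ftilde))),
          Qinv (mk2 f1 (ContinuousLinearMap.adjoint C12 f1))⟫ = 0) := by
  -- Q is self-adjoint
  have hQsa : ∀ r s : WithLp 2 (H × H), ⟪Q r, s⟫ = ⟪r, Q s⟫ := by
    intro r s
    rw [hQ r, hQ s, inner_mk2_left, inner_mk2_right]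
    simp only [pr1_mk2, pr2_mk2, inner_add_left, inner_add_right,
      ContinuousLinearMap.adjoint_inner_left, ContinuousLinearMap.adjoint_inner_right]
    ring
  have key : ∀ r y : WithLp 2 (H × H), ⟪Q r, Qinv y⟫ = ⟪r, y⟫ := by
    intro r y
    rw [hQsa]
    have : Q (Qinv y) = y := by
      have := congrArg (fun T => T y) hQQi
      simpa using this
    rw [this]
  -- K applied: (1 - C12* C12) (K f) = f
  have hKapp : ∀ f : H, K f - ContinuousLinearMap.adjoint C12 (C12 (K f)) = f := by
    intro f
    have := congrArg (fun T => T f) hK1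
    simpa [ContinuousLinearMap.sub_apply] using this
  intro f
  refine ⟨?_, ?_, ?_⟩
  · intro g
    have hd : mk2 (C12 (K f)) (K f) - mk2 0 f = Q (mk2 (C12 (K f)) 0) := by
      rw [hQ, mk2_sub, pr1_mk2, pr2_mk2]
      have h5 : K f - f = ContinuousLinearMap.adjoint C12 (C12 (K f)) := by
        have h := hKapp f
        rw [sub_eq_iff_eq_add] at h ⊢
        nth_rw 1 [h]; abel
      rw [mk2_eq_iff]
      exact ⟨by simp, by rw [h5]; simp⟩
    rw [hd, key, inner_mk2]
    simp
  · intro f2' h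
    have h1 : ∀ g : H, ⟪mk2 (C12 (K f)) (K f) - mk2 0 f, Qinv (mk2 0 g)⟫ = 0 := by
      intro g
      have hd : mk2 (C12 (K f)) (K f) - mk2 0 f = Q (mk2 (C12 (K f)) 0) := by
        rw [hQ, mk2_sub, pr1_mk2, pr2_mk2]
        have h5 : K f - f = ContinuousLinearMap.adjoint C12 (C12 (K f)) := by
          have h := hKapp f
          rw [sub_eq_iff_eq_add] at h ⊢
          nth_rw 1 [h]; abel
        rw [mk2_eq_iff]
        exact ⟨by simp, by rw [h5]; simp⟩
      rw [hd, key, inner_mk2]; simp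
    have e := f2' - K f
    have hdiff : ∀ g : H, ⟪mk2 (C12 (f2' - K f)) (f2' - K f), Qinv (mk2 0 g)⟫ = 0 := by
      intro g
      have := sub_eq_zero.mpr (rfl : (0:ℝ) = 0)
      have h2 := h g
      have h3 := h1 g
      have : mk2 (C12 (f2' - K f)) (f2' - K f)
          = (mk2 (C12 f2') f2' - mk2 0 f) - (mk2 (C12 (K f)) (K f) - mk2 0 f) := by
        simp [mk2_sub, map_sub]
      rw [this, inner_sub_left, h2, h3, sub_zero]
    have hQe : ∀ g : H, ⟪(f2' - K f : H), g⟫ = 0 := by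
      intro g
      have hq : mk2 (C12 (f2' - K f)) (f2' - K f) = Q (mk2 0 (f2' - K f)) := by
        rw [hQ, pr1_mk2, pr2_mk2]; simp
      have := hdiff g
      rw [hq, key, inner_mk2] at this
      simpa using this
    have : f2' - K f = 0 := inner_self_eq_zero.mp (hQe (f2' - K f))
    exact sub_eq_zero.mp this
  · intro f1
    have hd : mk2 (C12 (K f)) (K f)
        - mk2 (C12 (K f)) (ContinuousLinearMap.adjoint C12 (C12 (K f)))
        = Q (mk2 (-(C12 (K f))) (K f)) := by
      rw [hQ, mk2_sub, pr1_mk2, pr2_mk2, mk2_eq_iff]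
      exact ⟨by simp, by rw [map_neg]; abel⟩
    rw [hd, key, inner_mk2]
    rw [ContinuousLinearMap.adjoint_inner_right]
    simp
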